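/- arXiv:2409.00771 — 4 statements merged into one kernel-verified Lean document; each statement's English description precedes it below -/
import Mathlib

section
/- Swapping two adjacent same-type jobs j_a, j_b (with j_a before j_b and d_{j_a} > d_{j_b}) in a feasible schedule yields a feasible schedule: if in the original schedule every job meets its deadline, then after the swap every job still meets its deadline. -/
structure Job (T : Type) where
  t : ℕ
  d : ℕ
  τ : T

def comp {T : Type} (ℓ : T → T → ℕ) (π : ℕ → Job T) : ℕ → ℕ
  | 0 => (π 0).t
  | i + 1 => comp ℓ π i + ℓ (π i).τ (π (i + 1)).τ + (π (i + 1)).t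

theorem stmt3 {T : Type} (ℓ : T → T → ℕ) (hℓ : ∀ τ, ℓ τ τ = 0)
    (π π' : ℕ → Job T) (n a : ℕ) (han : a + 1 < n)
    (hτ : (π a).τ = (π (a + 1)).τ) (hd : (π (a + 1)).d < (π a).d)
    (h1 : π' a = π (a + 1)) (h2 : π' (a + 1) = π a)
    (h3 : ∀ i, i ≠ a → i ≠ a + 1 → π' i = π i)
    (hfeas : ∀ i, i < n → comp ℓ π i ≤ (π i).d) :
    ∀ i, i < n → comp ℓ π' i ≤ (π' i).d := by
  have hτall : ∀ i, (π' i).τ = (π i).τ := by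
    intro i
    by_cases hia : i = a
    · subst hia; rw [h1, hτ]
    · by_cases hib : i = a + 1
      · subst hib; rw [h2, hτ]
      · rw [h3 i hia hib]
  have hlow : ∀ i, i < a → comp ℓ π' i = comp ℓ π i := by
    intro i hi
    induction i with
    | zero => rw [comp, comp, h3 0 (by omega) (by omega)]
    | succ k ih =>
      rw [comp, comp, ih (by omega), h3 k (by omega) (by omega),
        h3 (k + 1) (by omega) (by omega)]
  have key1 : comp ℓ π' a + (π a).t = comp ℓ π (a + 1) := by
    cases a with
    | zero =>
      rw [comp, comp, comp, h1, ← hτ, hℓ]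
      omega
    | succ k =>
      rw [comp, comp, comp, hlow k (by omega), h3 k (by omega) (by omega), h1, ← hτ,
        hℓ]
      omega
  have key2 : comp ℓ π' (a + 1) = comp ℓ π (a + 1) := by
    rw [comp, h2, hτall a, hτ, hℓ, ← key1]
    omega
  have key3 : ∀ k, comp ℓ π' (a + 1 + k) = comp ℓ π (a + 1 + k) := by
    intro k
    induction k with
    | zero => exact key2
    | succ m ih =>
      have : a + 1 + (m + 1) = (a + 1 + m) + 1 := by omega
      rw [this, comp, comp, ih, hτall, h3 (a + 1 + m + 1) (by omega) (by omega)]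
  intro i hi
  rcases lt_trichotomy i a with h | h | h
  · rw [hlow i h, h3 i (by omega) (by omega)]
    exact hfeas i hi
  · subst h
    rw [h1]
    have := hfeas (i + 1) (by omega)
    omega
  · rcases Nat.lt_or_ge i (a + 2) with h' | h'
    · have : i = a + 1 := by omega
      subst this
      rw [key2, h2]
      have := hfeas (a + 1) (by omega)
      omega
    · have : i = a + 1 + (i - (a + 1)) := by omega
      rw [this, key3, ← this, h3 i (by omega) (by omega)]
      exact hfeas i hi
end

section
/- Suppose the setup mapping ℓ satisfies the triangle inequality. Let a schedule contain the consecutive pattern (prefix ending in type τ_pre) ∘ (j_a) ∘ σ ∘ (j_b) ∘ suffix, where j_a and j_b have the same type τ and no job of σ has type τ. Then moving j_a to just before j_b, yielding prefix ∘ σ ∘ (j_a, j_b) ∘ suffix, does not increase the makespan; precisely, the change in makespan equals ℓ(τ_pre, τ^1_σ) + ℓ(τ^2_σ, τ) − (ℓ(τ_pre, τ) + ℓ(τ, τ^1_σ) + ℓ(τ^2_σ, τ)) ≤ 0, where τ^1_σ and τ^2_σ are the types of the first and last job of σ. -/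
def cost {T : Type} (ℓ : T → T → ℕ) : List (Job T) → ℕ
  | [] => 0
  | [j] => j.t
  | j1 :: j2 :: rest => j1.t + ℓ j1.τ j2.τ + cost ℓ (j2 :: rest)

lemma cost_append {T : Type} (ℓ : T → T → ℕ) (l1 l2 : List (Job T)) (a b : Job T)
    (h1 : l1.getLast? = some a) (h2 : l2.head? = some b) :
    cost ℓ (l1 ++ l2) = cost ℓ l1 + ℓ a.τ b.τ + cost ℓ l2 := by
  induction l1 with
  | nil => simp at h1
  | cons x rest ih =>
    cases rest with
    | nil =>
      simp at h1
      subst h1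
      cases l2 with
      | nil => simp at h2
      | cons y t =>
        simp at h2
        subst h2
        simp [cost]
    | cons y rest' =>
      have h1' : (y :: rest').getLast? = some a := by
        rw [List.getLast?_cons_cons] at h1; exact h1
      have key := ih h1'
      simp only [List.cons_append] at key ⊢
      rw [show cost ℓ (x :: y :: (rest' ++ l2)) = x.t + ℓ x.τ y.τ + cost ℓ (y :: (rest' ++ l2)) from rfl,
        key, show cost ℓ (x :: y :: rest') = x.t + ℓ x.τ y.τ + cost ℓ (y :: rest') from rfl]
      omega

theorem stmt4 {T : Type} (ℓ : T → T → ℕ)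
    (hrefl : ∀ τ, ℓ τ τ = 0)
    (htri : ∀ τ1 τ2 τ3, ℓ τ1 τ3 ≤ ℓ τ1 τ2 + ℓ τ2 τ3)
    (pre σ suf : List (Job T)) (ja jb jpre js1 js2 : Job T) (τ τpre : T)
    (hja : ja.τ = τ) (hjb : jb.τ = τ)
    (hσ : ∀ j ∈ σ, j.τ ≠ τ)
    (hpre : pre.getLast? = some jpre) (hτpre : jpre.τ = τpre)
    (hσ1 : σ.head? = some js1) (hσ2 : σ.getLast? = some js2) :
    cost ℓ (pre ++ σ ++ [ja, jb] ++ suf) + (ℓ τpre τ + ℓ τ js1.τ + ℓ js2.τ τ)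
      = cost ℓ (pre ++ [ja] ++ σ ++ [jb] ++ suf) + (ℓ τpre js1.τ + ℓ js2.τ τ) ∧
    cost ℓ (pre ++ σ ++ [ja, jb] ++ suf) ≤ cost ℓ (pre ++ [ja] ++ σ ++ [jb] ++ suf) := by
  have hσne : σ ≠ [] := by rintro rfl; simp at hσ1
  have e1 : cost ℓ (pre ++ σ ++ [ja, jb] ++ suf)
      = cost ℓ pre + ℓ jpre.τ js1.τ + (cost ℓ σ + ℓ js2.τ ja.τ + cost ℓ ([ja, jb] ++ suf)) := by
    rw [List.append_assoc, List.append_assoc,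
      cost_append ℓ pre (σ ++ ([ja, jb] ++ suf)) jpre js1 hpre (by
        cases σ with
        | nil => simp at hσ1
        | cons x t => simp at hσ1 ⊢; exact hσ1),
      cost_append ℓ σ ([ja, jb] ++ suf) js2 ja hσ2 (by simp)]
  have e2 : cost ℓ ([ja, jb] ++ suf) = ja.t + ℓ ja.τ jb.τ + cost ℓ ([jb] ++ suf) := by
    cases suf <;> simp [cost]
  have e3 : cost ℓ (pre ++ [ja] ++ σ ++ [jb] ++ suf)
      = cost ℓ pre + ℓ jpre.τ ja.τ
        + (ja.t + ℓ ja.τ js1.τ + (cost ℓ σ + ℓ js2.τ jb.τ + cost ℓ ([jb] ++ suf))) := by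
    rw [List.append_assoc, List.append_assoc, List.append_assoc,
      cost_append ℓ pre ([ja] ++ (σ ++ ([jb] ++ suf))) jpre ja hpre (by simp)]
    have : cost ℓ ([ja] ++ (σ ++ ([jb] ++ suf)))
        = ja.t + ℓ ja.τ js1.τ + cost ℓ (σ ++ ([jb] ++ suf)) := by
      rw [cost_append ℓ [ja] (σ ++ ([jb] ++ suf)) ja js1 (by simp) (by
        cases σ with
        | nil => simp at hσ1
        | cons x t => simp at hσ1 ⊢; exact hσ1)]
      simp [cost]
    rw [this, cost_append ℓ σ ([jb] ++ suf) js2 jb hσ2 (by simp)]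
  have hjj : ℓ ja.τ jb.τ = 0 := by rw [hja, hjb, hrefl]
  have htr := htri τpre τ js1.τ
  simp only [hja, hjb, hτpre] at e1 e2 e3 hjj htr
  constructor <;> rw [e1, e2, e3] <;> omega
end

section
/- Let ℓ satisfy ℓ(τ,τ)=0 and the triangle inequality. If there exists a feasible schedule π' of a job set J with makespan at most M, then there exists a feasible EDDS π'' of J with makespan at most M. -/
def feasibleL {T : Type} (ℓ : T → T → ℕ) (L : List (Job T)) : Prop :=
  ∀ (i : ℕ) (h : i < L.length), cost ℓ (L.take (i + 1)) ≤ (L.get ⟨i, h⟩).d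

def EDDS {T : Type} [DecidableEq T] (L : List (Job T)) : Prop :=
  ∀ τ : T, List.Pairwise (· ≤ ·) ((L.filter (fun j => j.τ = τ)).map Job.d)

namespace SchedAux

set_option linter.unusedSectionVars false

variable {T : Type} [DecidableEq T]

def costAux (ℓ : T → T → ℕ) : T → List (Job T) → ℕ
  | _, [] => 0
  | τ0, j :: r => ℓ τ0 j.τ + j.t + costAux ℓ j.τ r

lemma cost_cons (ℓ : T → T → ℕ) : ∀ (r : List (Job T)) (j : Job T),
    cost ℓ (j :: r) = j.t + costAux ℓ j.τ r := by
  intro r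
  induction r with
  | nil => intro j; simp [cost, costAux]
  | cons k r ih =>
    intro j
    simp only [cost, costAux, ih k]
    omega

lemma cost_le_costAux (ℓ : T → T → ℕ) (τ0 : T) (Y : List (Job T)) :
    cost ℓ Y ≤ costAux ℓ τ0 Y := by
  cases Y with
  | nil => simp [cost, costAux]
  | cons j r => rw [cost_cons]; simp [costAux]

lemma costAux_triangle (ℓ : T → T → ℕ)
    (htri : ∀ τ1 τ2 τ3, ℓ τ1 τ3 ≤ ℓ τ1 τ2 + ℓ τ2 τ3) (τ0 τ1 : T) (Y : List (Job T)) :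
    costAux ℓ τ0 Y ≤ ℓ τ0 τ1 + costAux ℓ τ1 Y := by
  cases Y with
  | nil => simp [costAux]
  | cons j r => simp only [costAux]; have := htri τ0 τ1 j.τ; omega

lemma costAux_insert_ge (ℓ : T → T → ℕ)
    (htri : ∀ τ1 τ2 τ3, ℓ τ1 τ3 ≤ ℓ τ1 τ2 + ℓ τ2 τ3) (w : Job T) (Y : List (Job T)) :
    ∀ (X : List (Job T)) (τ0 : T),
      costAux ℓ τ0 (X ++ Y) + w.t ≤ costAux ℓ τ0 (X ++ w :: Y) := by
  intro X
  induction X with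
  | nil =>
    intro τ0
    simp only [List.nil_append, costAux]
    have := costAux_triangle ℓ htri τ0 w.τ Y
    omega
  | cons x X ih =>
    intro τ0
    simp only [List.cons_append, costAux, List.append_eq]
    have := ih x.τ
    omega

lemma cost_insert_ge (ℓ : T → T → ℕ)
    (htri : ∀ τ1 τ2 τ3, ℓ τ1 τ3 ≤ ℓ τ1 τ2 + ℓ τ2 τ3) (w : Job T) (X Y : List (Job T)) :
    cost ℓ (X ++ Y) + w.t ≤ cost ℓ (X ++ w :: Y) := by
  cases X with
  | nil =>
    simp only [List.nil_append]
    rw [cost_cons]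
    have := cost_le_costAux ℓ w.τ Y
    omega
  | cons x X =>
    simp only [List.cons_append]
    rw [cost_cons, cost_cons]
    have := costAux_insert_ge ℓ htri w Y X x.τ
    omega

lemma cost_remove_le (ℓ : T → T → ℕ)
    (htri : ∀ τ1 τ2 τ3, ℓ τ1 τ3 ≤ ℓ τ1 τ2 + ℓ τ2 τ3) (w : Job T) (X Y : List (Job T)) :
    cost ℓ (X ++ Y) ≤ cost ℓ (X ++ w :: Y) := by
  have := cost_insert_ge ℓ htri w X Y
  omega

lemma costAux_dup (ℓ : T → T → ℕ) (hrefl : ∀ τ, ℓ τ τ = 0)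
    (u v : Job T) (hτ : u.τ = v.τ) (Z : List (Job T)) :
    ∀ (W : List (Job T)) (τ0 : T),
      costAux ℓ τ0 (W ++ v :: u :: Z) = costAux ℓ τ0 (W ++ v :: Z) + u.t := by
  intro W
  induction W with
  | nil =>
    intro τ0
    simp only [List.nil_append, costAux, hτ, hrefl]
    omega
  | cons x X ih =>
    intro τ0
    simp only [List.cons_append, costAux, List.append_eq]
    have := ih x.τ
    omega

lemma cost_dup (ℓ : T → T → ℕ) (hrefl : ∀ τ, ℓ τ τ = 0)
    (u v : Job T) (hτ : u.τ = v.τ) (W Z : List (Job T)) :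
    cost ℓ (W ++ v :: u :: Z) = cost ℓ (W ++ v :: Z) + u.t := by
  cases W with
  | nil =>
    simp only [List.nil_append]
    rw [cost_cons, cost_cons]
    simp only [costAux, hτ, hrefl]
    omega
  | cons x X =>
    simp only [List.cons_append]
    rw [cost_cons, cost_cons]
    have := costAux_dup ℓ hrefl u v hτ Z X x.τ
    omega

lemma feasibleL_iff (ℓ : T → T → ℕ) (L : List (Job T)) :
    feasibleL ℓ L ↔ ∀ (P : List (Job T)) (j : Job T) (S : List (Job T)),
      L = P ++ j :: S → cost ℓ (P ++ [j]) ≤ j.d := by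
  constructor
  · intro hf P j S hL
    have hlen : P.length < L.length := by subst hL; simp
    have h1 : L.take (P.length + 1) = P ++ [j] := by
      subst hL
      rw [List.take_append]
      simp
    have h2 : L.get ⟨P.length, hlen⟩ = j := by
      subst hL
      simp [List.getElem_append_right]
    have := hf P.length hlen
    rwa [h1, h2] at this
  · intro hf i hi
    have hL : L = L.take i ++ L[i] :: L.drop (i + 1) := by
      conv_lhs => rw [← List.take_append_drop i L]
      rw [List.drop_eq_getElem_cons hi]
    have := hf (L.take i) L[i] (L.drop (i+1)) hL
    have ht : L.take (i + 1) = L.take i ++ [L[i]] := by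
      rw [List.take_succ]
      simp [List.getElem?_eq_getElem hi]
    rw [ht]
    simpa using this

end SchedAux
namespace SchedAux
variable {T : Type} [DecidableEq T]

lemma split_locate {α : Type*} : ∀ (X : List α) (P Y S : List α) (j : α),
    P ++ j :: S = X ++ Y →
    (∃ P2, X = P ++ j :: P2 ∧ S = P2 ++ Y) ∨ (∃ P1, P = X ++ P1 ∧ P1 ++ j :: S = Y) := by
  intro X
  induction X with
  | nil =>
    intro P Y S j h
    exact Or.inr ⟨P, by simp, by simpa using h⟩
  | cons x X ih =>
    intro P Y S j h
    cases P with
    | nil =>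
      simp only [List.nil_append, List.cons_append] at h
      injection h with h1 h2
      subst h1
      exact Or.inl ⟨X, rfl, h2⟩
    | cons p P =>
      simp only [List.cons_append] at h
      injection h with h1 h2
      subst h1
      rcases ih P Y S j h2 with ⟨P2, ha, hb⟩ | ⟨P1, ha, hb⟩
      · exact Or.inl ⟨P2, by rw [ha]; simp, hb⟩
      · exact Or.inr ⟨P1, by rw [ha]; simp, hb⟩

lemma feas_step (ℓ : T → T → ℕ) (hrefl : ∀ τ, ℓ τ τ = 0)
    (htri : ∀ τ1 τ2 τ3, ℓ τ1 τ3 ≤ ℓ τ1 τ2 + ℓ τ2 τ3)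
    (A B C : List (Job T)) (u v : Job T) (hτ : u.τ = v.τ) (hd : v.d ≤ u.d)
    (hfeas : feasibleL ℓ (A ++ u :: B ++ v :: C)) :
    feasibleL ℓ (A ++ (B ++ v :: u :: C)) := by
  rw [feasibleL_iff] at hfeas ⊢
  intro P j S hsplit
  rcases split_locate A P (B ++ v :: u :: C) S j hsplit.symm with
    ⟨P2, hA, hS⟩ | ⟨P1, hP, hrest⟩
  · -- j inside A
    exact hfeas P j (P2 ++ u :: B ++ v :: C) (by rw [hA]; simp)
  · rcases split_locate B P1 (v :: u :: C) S j hrest with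
      ⟨P2, hB, hS⟩ | ⟨Q, hP1, hrest2⟩
    · -- j inside B
      subst hP hB
      have hold := hfeas (A ++ u :: P1) j (P2 ++ v :: C) (by simp)
      have hle : cost ℓ (A ++ (P1 ++ [j])) ≤ cost ℓ (A ++ u :: (P1 ++ [j])) :=
        cost_remove_le ℓ htri u A (P1 ++ [j])
      simp only [List.append_assoc, List.cons_append] at hle hold ⊢
      exact le_trans hle hold
    · -- j = v, j = u, or j inside C
      subst hP hP1
      cases Q with
      | nil =>
        -- j = v
        rw [List.nil_append] at hrest2
        injection hrest2 with h1 h2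
        subst h1
        have hold := hfeas (A ++ u :: B) j C (by simp)
        have hle : cost ℓ (A ++ (B ++ [j])) ≤ cost ℓ (A ++ u :: (B ++ [j])) :=
          cost_remove_le ℓ htri u A (B ++ [j])
        simp only [List.append_assoc, List.cons_append] at hle hold ⊢
        exact le_trans hle hold
      | cons q Q =>
        rw [List.cons_append] at hrest2
        injection hrest2 with h1 h2
        subst h1
        cases Q with
        | nil =>
          -- j = u
          rw [List.nil_append] at h2
          injection h2 with h3 h4
          subst h3 h4
          have hdup : cost ℓ ((A ++ B) ++ q :: j :: []) = cost ℓ ((A ++ B) ++ q :: []) + j.t :=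
            cost_dup ℓ hrefl j q hτ (A ++ B) []
          have hins : cost ℓ (A ++ (B ++ [q])) + j.t ≤ cost ℓ (A ++ j :: (B ++ [q])) :=
            cost_insert_ge ℓ htri j A (B ++ [q])
          have hold := hfeas (A ++ j :: B) q S (by simp)
          calc cost ℓ (A ++ (B ++ [q]) ++ [j]) = cost ℓ (A ++ (B ++ [q])) + j.t := by
                simpa [List.append_assoc] using hdup
            _ ≤ cost ℓ (A ++ j :: (B ++ [q])) := hins
            _ ≤ q.d := by simpa [List.append_assoc] using hold
            _ ≤ j.d := hd
        | cons w Q =>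
          -- j inside C
          rw [List.cons_append] at h2
          injection h2 with h3 h4
          subst h3
          -- h4 : Q ++ j :: S = C
          have hdup : cost ℓ ((A ++ B) ++ q :: w :: (Q ++ [j]))
              = cost ℓ ((A ++ B) ++ q :: (Q ++ [j])) + w.t :=
            cost_dup ℓ hrefl w q hτ (A ++ B) (Q ++ [j])
          have hins : cost ℓ (A ++ (B ++ q :: (Q ++ [j]))) + w.t
              ≤ cost ℓ (A ++ w :: (B ++ q :: (Q ++ [j]))) :=
            cost_insert_ge ℓ htri w A (B ++ q :: (Q ++ [j]))
          have hold := hfeas (A ++ w :: B ++ q :: Q) j S (by rw [← h4]; simp)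
          calc cost ℓ (A ++ (B ++ q :: w :: Q) ++ [j])
              = cost ℓ (A ++ (B ++ q :: (Q ++ [j]))) + w.t := by
                simpa [List.append_assoc] using hdup
            _ ≤ cost ℓ (A ++ w :: (B ++ q :: (Q ++ [j]))) := hins
            _ ≤ j.d := by simpa [List.append_assoc] using hold

end SchedAux
namespace SchedAux
set_option linter.unusedSectionVars false
variable {T : Type} [DecidableEq T]

def bad (j x : Job T) : Bool := decide (j.τ = x.τ ∧ x.d < j.d)

def cnt (j : Job T) (Y : List (Job T)) : ℕ := Y.countP (bad j)

def badPairs : List (Job T) → ℕ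
  | [] => 0
  | j :: r => cnt j r + badPairs r

lemma cnt_perm (j : Job T) {Y Z : List (Job T)} (h : Y.Perm Z) : cnt j Y = cnt j Z :=
  h.countP_eq _

lemma perm_move (B C : List (Job T)) (u v : Job T) :
    (B ++ v :: u :: C).Perm (u :: (B ++ v :: C)) := by
  have h : B ++ v :: u :: C = (B ++ [v]) ++ u :: C := by simp
  have h2 : (B ++ [v]) ++ C = B ++ v :: C := by simp
  rw [h]
  have := @List.perm_middle _ u (B ++ [v]) C
  rwa [h2] at this

lemma badPairs_step (u v : Job T) (hτ : u.τ = v.τ) (hd : v.d < u.d)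
    (B C : List (Job T)) (hB : ∀ b ∈ B, b.τ ≠ u.τ) :
    ∀ A : List (Job T),
      badPairs (A ++ (B ++ v :: u :: C)) + 1 = badPairs (A ++ u :: B ++ v :: C) := by
  intro A
  induction A with
  | cons a A ih =>
    simp only [List.cons_append, badPairs, List.append_eq]
    have hc : cnt a (A ++ (B ++ v :: u :: C)) = cnt a (A ++ u :: B ++ v :: C) := by
      apply cnt_perm
      calc (A ++ (B ++ v :: u :: C)).Perm (A ++ u :: (B ++ v :: C)) :=
            List.Perm.append_left A (perm_move B C u v)
        _ = A ++ u :: B ++ v :: C := by simp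
    simp only [List.append_assoc, List.cons_append] at hc ih ⊢
    omega
  | nil =>
    simp only [List.nil_append, badPairs]
    induction B with
    | nil =>
      have h1 : bad v u = false := by
        simp only [bad, decide_eq_false_iff_not, not_and, not_lt]
        intro _; omega
      have h2 : bad u v = true := by
        simp only [bad, decide_eq_true_eq]
        exact ⟨hτ, hd⟩
      simp only [List.append_eq, List.nil_append, List.cons_append, badPairs, cnt, List.countP_cons, h1, h2,
        Bool.false_eq_true, if_false, if_true]
      omega
    | cons b B ihB =>
      have hbu : b.τ ≠ u.τ := hB b (by simp)
      have hB' : ∀ x ∈ B, x.τ ≠ u.τ := fun x hx => hB x (by simp [hx])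
      have hbad : bad b u = false := by
        simp only [bad, decide_eq_false_iff_not, not_and, not_lt]
        intro h; exact absurd h hbu
      have hbadu : bad u b = false := by
        simp only [bad, decide_eq_false_iff_not, not_and, not_lt]
        intro h; exact absurd h.symm hbu
      have hc : cnt b (B ++ v :: u :: C) = cnt b (B ++ v :: C) := by
        rw [cnt_perm b (perm_move B C u v)]
        simp [cnt, List.countP_cons, hbad]
      have hthis := ihB hB'
      simp only [cnt] at hc
      simp only [List.cons_append, badPairs, List.append_eq, cnt, List.countP_cons,
        hbadu, Bool.false_eq_true, if_false] at hthis ⊢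
      omega

end SchedAux
namespace SchedAux
set_option linter.unusedSectionVars false
variable {T : Type} [DecidableEq T]

lemma filter_eq_cons_decomp (p : Job T → Bool) :
    ∀ (L : List (Job T)) (v : Job T) (F : List (Job T)), L.filter p = v :: F →
      ∃ B C, L = B ++ v :: C ∧ (∀ b ∈ B, p b = false) := by
  intro L
  induction L with
  | nil => intro v F h; simp at h
  | cons j rest ih =>
    intro v F h
    by_cases hp : p j
    · rw [List.filter_cons_of_pos hp] at h
      injection h with h1 h2
      subst h1
      exact ⟨[], rest, by simp, by simp⟩
    · rw [List.filter_cons_of_neg hp] at h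
      obtain ⟨B, C, hBC, hB⟩ := ih v F h
      refine ⟨j :: B, C, by simp [hBC], ?_⟩
      intro b hb
      rcases List.mem_cons.mp hb with rfl | hb
      · simpa using hp
      · exact hB b hb

lemma decomp (p : Job T → Bool) :
    ∀ (L : List (Job T)), ¬ List.Pairwise (· ≤ ·) ((L.filter p).map Job.d) →
      ∃ A u B v C, L = A ++ u :: B ++ v :: C ∧ p u = true ∧ p v = true ∧
        v.d < u.d ∧ ∀ b ∈ B, p b = false := by
  intro L
  induction L with
  | nil => intro h; simp [List.Pairwise] at h
  | cons j rest ih =>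
    intro h
    by_cases hp : p j
    · rw [List.filter_cons_of_pos hp, List.map_cons] at h
      by_cases hs : List.Pairwise (· ≤ ·) ((rest.filter p).map Job.d)
      · -- head violation
        rw [List.pairwise_cons] at h
        have h' : ¬ ∀ b ∈ (rest.filter p).map Job.d, j.d ≤ b := fun hall => h ⟨hall, hs⟩
        push_neg at h'
        obtain ⟨y, hy, hyd⟩ := h'
        have hne : (rest.filter p).map Job.d ≠ [] := by
          intro he; rw [he] at hy; simp at hy
        obtain ⟨w, F, hwF⟩ : ∃ w F, rest.filter p = w :: F := by
          cases hF : rest.filter p with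
          | nil => exact absurd (by rw [hF]; rfl) hne
          | cons w F => exact ⟨w, F, rfl⟩
        have hwd : w.d < j.d := by
          rw [hwF, List.map_cons] at hy hs
          rcases List.mem_cons.mp hy with rfl | hy2
          · omega
          · have := (List.pairwise_cons.mp hs).1 y hy2
            omega
        obtain ⟨B, C, hBC, hB⟩ := filter_eq_cons_decomp p rest w F hwF
        have hw : p w = true := by
          have : w ∈ rest.filter p := by rw [hwF]; simp
          exact (List.mem_filter.mp this).2
        exact ⟨[], j, B, w, C, by simp [hBC], hp, hw, hwd, hB⟩
      · obtain ⟨A, u, B, v, C, hL, h1, h2, h3, h4⟩ := ih hs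
        exact ⟨j :: A, u, B, v, C, by simp [hL], h1, h2, h3, h4⟩
    · rw [List.filter_cons_of_neg hp] at h
      obtain ⟨A, u, B, v, C, hL, h1, h2, h3, h4⟩ := ih h
      exact ⟨j :: A, u, B, v, C, by simp [hL], h1, h2, h3, h4⟩

end SchedAux
namespace SchedAux
set_option linter.unusedSectionVars false
variable {T : Type} [DecidableEq T]

lemma step_all (ℓ : T → T → ℕ) (hrefl : ∀ τ, ℓ τ τ = 0)
    (htri : ∀ τ1 τ2 τ3, ℓ τ1 τ3 ≤ ℓ τ1 τ2 + ℓ τ2 τ3)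
    (L : List (Job T)) (hf : feasibleL ℓ L) (hE : ¬ EDDS L) :
    ∃ L', L'.Perm L ∧ feasibleL ℓ L' ∧ badPairs L' + 1 = badPairs L ∧
      cost ℓ L' ≤ cost ℓ L := by
  unfold EDDS at hE
  push_neg at hE
  obtain ⟨τ, hτs⟩ := hE
  obtain ⟨A, u, B, v, C, hL, hu, hv, hd, hB⟩ :=
    decomp (fun j => decide (j.τ = τ)) L hτs
  have huτ : u.τ = τ := of_decide_eq_true hu
  have hvτ : v.τ = τ := of_decide_eq_true hv
  have hτuv : u.τ = v.τ := by rw [huτ, hvτ]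
  have hB' : ∀ b ∈ B, b.τ ≠ u.τ := by
    intro b hb
    have := of_decide_eq_false (hB b hb)
    rw [huτ]; exact this
  refine ⟨A ++ (B ++ v :: u :: C), ?_, ?_, ?_, ?_⟩
  · rw [hL]
    calc (A ++ (B ++ v :: u :: C)).Perm (A ++ u :: (B ++ v :: C)) :=
          List.Perm.append_left A (perm_move B C u v)
      _ = A ++ u :: B ++ v :: C := by simp
  · exact feas_step ℓ hrefl htri A B C u v hτuv (le_of_lt hd) (hL ▸ hf)
  · rw [hL]
    exact badPairs_step u v hτuv hd B C hB' A
  · rw [hL]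
    have h1 : cost ℓ ((A ++ B) ++ v :: u :: C) = cost ℓ ((A ++ B) ++ v :: C) + u.t :=
      cost_dup ℓ hrefl u v hτuv (A ++ B) C
    have h2 : cost ℓ (A ++ (B ++ v :: C)) + u.t ≤ cost ℓ (A ++ u :: (B ++ v :: C)) :=
      cost_insert_ge ℓ htri u A (B ++ v :: C)
    calc cost ℓ (A ++ (B ++ v :: u :: C)) = cost ℓ (A ++ (B ++ v :: C)) + u.t := by
          simpa [List.append_assoc] using h1
      _ ≤ cost ℓ (A ++ u :: (B ++ v :: C)) := h2
      _ = cost ℓ (A ++ u :: B ++ v :: C) := by simp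

lemma exists_edds (ℓ : T → T → ℕ) (hrefl : ∀ τ, ℓ τ τ = 0)
    (htri : ∀ τ1 τ2 τ3, ℓ τ1 τ3 ≤ ℓ τ1 τ2 + ℓ τ2 τ3) :
    ∀ (n : ℕ) (L : List (Job T)), badPairs L ≤ n → feasibleL ℓ L →
      ∃ L', L'.Perm L ∧ feasibleL ℓ L' ∧ EDDS L' ∧ cost ℓ L' ≤ cost ℓ L := by
  intro n
  induction n with
  | zero =>
    intro L hn hf
    by_cases hE : EDDS L
    · exact ⟨L, List.Perm.refl L, hf, hE, le_refl _⟩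
    · obtain ⟨L', _, _, hbp, _⟩ := step_all ℓ hrefl htri L hf hE
      omega
  | succ n ih =>
    intro L hn hf
    by_cases hE : EDDS L
    · exact ⟨L, List.Perm.refl L, hf, hE, le_refl _⟩
    · obtain ⟨L', hperm, hfeas, hbp, hcost⟩ := step_all ℓ hrefl htri L hf hE
      obtain ⟨L'', hperm2, hfeas2, hE2, hcost2⟩ := ih L' (by omega) hfeas
      exact ⟨L'', hperm2.trans hperm, hfeas2, hE2, le_trans hcost2 hcost⟩

end SchedAux

theorem stmt6 {T : Type} [DecidableEq T] (ℓ : T → T → ℕ)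
    (hrefl : ∀ τ, ℓ τ τ = 0)
    (htri : ∀ τ1 τ2 τ3, ℓ τ1 τ3 ≤ ℓ τ1 τ2 + ℓ τ2 τ3)
    (J : List (Job T)) (M : ℕ)
    (h : ∃ L : List (Job T), L.Perm J ∧ feasibleL ℓ L ∧ cost ℓ L ≤ M) :
    ∃ L : List (Job T), L.Perm J ∧ feasibleL ℓ L ∧ EDDS L ∧ cost ℓ L ≤ M := by
  obtain ⟨L, hperm, hfeas, hcost⟩ := h
  obtain ⟨L', hperm', hfeas', hE', hcost'⟩ :=
    SchedAux.exists_edds ℓ hrefl htri (SchedAux.badPairs L) L (le_refl _) hfeas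
  exact ⟨L', hperm'.trans hperm, hfeas', hE', le_trans hcost' hcost⟩
end

section
/- For a Hamiltonian cycle C' = (v_1,...,v_n) on n vertices with edge weights ω, the schedule π_{C'} = (r_{v_1}, out_{v_1}, in_{v_2}, l_{v_2}, r_{v_2}, out_{v_2}, ..., out_{v_n}, in_{v_1}, l_{v_1}) has total setup time exactly 9n − 3 + ω(C'), where setup times are: ℓ(in_v, l_v) = 2, ℓ(r_v, out_v) = 2, ℓ(l_v, r_v) = 3, and ℓ(out_v, in_w) = 2 + ω({v, w}) for v ≠ w. -/
inductive GJob (n : ℕ) where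
  | jin (v : Fin n)
  | jl (v : Fin n)
  | jr (v : Fin n)
  | jout (v : Fin n)

def totalSetup {α : Type} (ℓ : α → α → ℕ) : List α → ℕ
  | a :: b :: rest => ℓ a b + totalSetup ℓ (b :: rest)
  | _ => 0

lemma totalSetup_cons {α : Type} (ℓ : α → α → ℕ) (a b : α) (l : List α) :
    totalSetup ℓ (a :: b :: l) = ℓ a b + totalSetup ℓ (b :: l) := rfl

/-- sum of `f` along the chain `v :: l ++ [w]`. -/
def chainW {m : ℕ} (f : Fin m → Fin m → ℕ) : Fin m → List (Fin m) → Fin m → ℕ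
  | v, [], w => f v w
  | v, a :: l, w => f v a + chainW f a l w

lemma chainW_eq_sum {m : ℕ} (f : Fin m → Fin m → ℕ) :
    ∀ (l : List (Fin m)) (v w : Fin m),
      chainW f v l w = (List.zipWith f (v :: l) (l ++ [w])).sum := by
  intro l
  induction l with
  | nil => intro v w; simp [chainW]
  | cons a l ih => intro v w; simp [chainW, ih a w]

lemma zip_rotate_sum (n : ℕ) (f : Fin (n + 2) → Fin (n + 2) → ℕ) :
    (List.zipWith f (List.finRange (n + 2)) ((List.finRange (n + 2)).rotate 1)).sum
      = ∑ i : Fin (n + 2), f i (i + 1) := by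
  have hz : List.zipWith f (List.finRange (n + 2)) ((List.finRange (n + 2)).rotate 1)
      = List.ofFn (fun i : Fin (n + 2) => f i (i + 1)) := by
    apply List.ext_getElem
    · simp
    · intro k h1 h2
      have hk : k < n + 2 := by simp at h2; omega
      rw [List.getElem_zipWith, List.getElem_ofFn, List.getElem_rotate,
        List.getElem_finRange, List.getElem_finRange]
      congr 1
      apply Fin.ext
      simp [Fin.add_def, Fin.val_one, Nat.one_mod]
  rw [hz, List.sum_ofFn]

lemma aux_setup (n : ℕ) (ω : Fin (n + 2) → Fin (n + 2) → ℕ)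
    (ℓ : GJob (n + 2) → GJob (n + 2) → ℕ)
    (h1 : ∀ v, ℓ (GJob.jin v) (GJob.jl v) = 2)
    (h2 : ∀ v, ℓ (GJob.jr v) (GJob.jout v) = 2)
    (h3 : ∀ v, ℓ (GJob.jl v) (GJob.jr v) = 3)
    (h4 : ∀ v w, v ≠ w → ℓ (GJob.jout v) (GJob.jin w) = 2 + ω v w)
    (c : Equiv.Perm (Fin (n + 2))) :
    ∀ (l : List (Fin (n + 2))) (v : Fin (n + 2)),
      List.Chain' (· ≠ ·) (v :: l ++ [0]) →
      totalSetup ℓ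
        (GJob.jout (c v) ::
          (l.flatMap (fun i => [GJob.jin (c i), GJob.jl (c i), GJob.jr (c i), GJob.jout (c i)]) ++
            [GJob.jin (c 0), GJob.jl (c 0)]))
        = 9 * l.length + 4 + chainW (fun a b => ω (c a) (c b)) v l 0 := by
  intro l
  induction l with
  | nil =>
    intro v hch
    have hv0 : v ≠ 0 := by
      simpa [List.Chain'] using hch
    simp only [List.flatMap_nil, List.nil_append, totalSetup_cons, totalSetup]
    rw [h4 _ _ (fun h => hv0 (c.injective h)), h1]
    simp [chainW]
    omega
  | cons a l ih =>
    intro v hch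
    have hch' : List.Chain' (· ≠ ·) ((a :: l) ++ [0]) :=
      (List.isChain_cons_cons.mp (by simpa [List.Chain'] using hch)).2
    have hva : v ≠ a :=
      (List.isChain_cons_cons.mp (by simpa [List.Chain'] using hch)).1
    have := ih a (by simpa using hch')
    simp only [List.flatMap_cons, List.cons_append, List.append_assoc,
      List.nil_append] at *
    rw [totalSetup_cons, totalSetup_cons, totalSetup_cons, totalSetup_cons,
      h4 _ _ (fun h => hva (c.injective h)), h1, h3, h2, this]
    simp only [chainW, List.length_cons]
    omega

theorem stmt14 (n : ℕ) (ω : Fin (n + 2) → Fin (n + 2) → ℕ)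
    (hsym : ∀ v w, ω v w = ω w v)
    (ℓ : GJob (n + 2) → GJob (n + 2) → ℕ)
    (h1 : ∀ v, ℓ (GJob.jin v) (GJob.jl v) = 2)
    (h2 : ∀ v, ℓ (GJob.jr v) (GJob.jout v) = 2)
    (h3 : ∀ v, ℓ (GJob.jl v) (GJob.jr v) = 3)
    (h4 : ∀ v w, v ≠ w → ℓ (GJob.jout v) (GJob.jin w) = 2 + ω v w)
    (c : Equiv.Perm (Fin (n + 2))) :
    totalSetup ℓ
      ([GJob.jr (c 0), GJob.jout (c 0)] ++
        ((List.finRange (n + 2)).drop 1).flatMap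
          (fun i => [GJob.jin (c i), GJob.jl (c i), GJob.jr (c i), GJob.jout (c i)]) ++
        [GJob.jin (c 0), GJob.jl (c 0)])
      = 9 * (n + 2) - 3 + ∑ i : Fin (n + 2), ω (c i) (c (i + 1)) := by
  -- basic facts about finRange
  have hfr : List.finRange (n + 2)
      = 0 :: (List.finRange (n + 2)).drop 1 := by
    rw [List.finRange_succ]; rfl
  have hlen : ((List.finRange (n + 2)).drop 1).length = n + 1 := by
    simp
  -- the chain condition
  have hchain : List.Chain' (· ≠ ·)
      ((0 : Fin (n + 2)) :: (List.finRange (n + 2)).drop 1 ++ [0]) := by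
    rw [← hfr, List.Chain', List.isChain_iff_getElem]
    intro i h
    have h' : i < n + 2 := by
      simp at h; omega
    rcases Nat.lt_or_ge (i + 1) (n + 2) with hi | hi
    · rw [List.getElem_append_left (by simpa using h'),
        List.getElem_append_left (by simpa using hi),
        List.getElem_finRange, List.getElem_finRange]
      intro hcontra
      have := congrArg Fin.val hcontra
      simp at this
    · have hi2 : i = n + 1 := by omega
      subst hi2
      rw [List.getElem_append_left (by simp),
        List.getElem_append_right (by simp),
        List.getElem_finRange]
      intro hcontra
      have := congrArg Fin.val hcontra
      simp at this
  -- rewrite the list and apply aux_setup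
  have key := aux_setup n ω ℓ h1 h2 h3 h4 c ((List.finRange (n + 2)).drop 1) 0 hchain
  have hshape : totalSetup ℓ
      ([GJob.jr (c 0), GJob.jout (c 0)] ++
        ((List.finRange (n + 2)).drop 1).flatMap
          (fun i => [GJob.jin (c i), GJob.jl (c i), GJob.jr (c i), GJob.jout (c i)]) ++
        [GJob.jin (c 0), GJob.jl (c 0)])
      = ℓ (GJob.jr (c 0)) (GJob.jout (c 0)) +
        totalSetup ℓ (GJob.jout (c 0) ::
          (((List.finRange (n + 2)).drop 1).flatMap
            (fun i => [GJob.jin (c i), GJob.jl (c i), GJob.jr (c i), GJob.jout (c i)]) ++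
            [GJob.jin (c 0), GJob.jl (c 0)])) := rfl
  rw [hshape, h2, key, hlen]
  -- now handle the chainW term
  have hrot : (List.finRange (n + 2)).drop 1 ++ [(0 : Fin (n + 2))]
      = (List.finRange (n + 2)).rotate 1 := by
    rw [List.rotate_eq_drop_append_take (by simp)]
    congr 1
    rw [List.finRange_succ]
    rfl
  rw [chainW_eq_sum, ← hfr, hrot, zip_rotate_sum]
  omega
end
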